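/- Let c : [R₁,R₂] → (0,∞) be C¹ radial. The Herglotz condition d/dr(r/c(r)) > 0 on [R₁,R₂] holds if and only if the function κ(x) = R₂ − |x| (whose level sets are the spheres |x| = const) defines a foliation of the annulus {R₁ ≤ |x| ≤ R₂} by hypersurfaces each of which is strictly convex with respect to c^{-2}dx² viewed from outside. -/

import Mathlib

open scoped RealInnerProductSpace

/-- Christoffel symbols of the conformally Euclidean metric `c⁻² dx²` on
`EuclideanSpace ℝ (Fin n)`:
`Γᵢⱼᵏ = (1/2) c² (δⱼᵏ ∂ᵢ(c⁻²) + δᵢᵏ ∂ⱼ(c⁻²) − δᵢⱼ ∂ₖ(c⁻²))`. -/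
noncomputable def gammaConf {n : ℕ} (c : EuclideanSpace ℝ (Fin n) → ℝ)
    (x : EuclideanSpace ℝ (Fin n)) (i j k : Fin n) : ℝ :=
  (1 / 2) * (c x) ^ 2 *
    ((if j = k then (1 : ℝ) else 0) * fderiv ℝ (fun y => ((c y) ^ 2)⁻¹) x (EuclideanSpace.single i 1)
      + (if i = k then (1 : ℝ) else 0) * fderiv ℝ (fun y => ((c y) ^ 2)⁻¹) x (EuclideanSpace.single j 1)
      - (if i = j then (1 : ℝ) else 0) * fderiv ℝ (fun y => ((c y) ^ 2)⁻¹) x (EuclideanSpace.single k 1))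

/-- The second fundamental form (up to the positive normalization `1/|∇f|_{g̃}`) of the level
set of `f` through `x`, with respect to the metric `c⁻² dx²` and with normal pointing in the
direction of `∇f`, evaluated on a tangent vector `ξ`:
`II(ξ,ξ) = Σᵢⱼ (∂ᵢ∂ⱼ f − Σₖ Γᵢⱼᵏ ∂ₖ f) ξ i ξ j`, i.e. the covariant Hessian of `f`. -/
noncomputable def sffConf {n : ℕ} (c f : EuclideanSpace ℝ (Fin n) → ℝ)
    (x ξ : EuclideanSpace ℝ (Fin n)) : ℝ :=
  ∑ i, ∑ j,
    (fderiv ℝ (fun y => fderiv ℝ f y (EuclideanSpace.single j 1)) x (EuclideanSpace.single i 1)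
      - ∑ k, gammaConf c x i j k * fderiv ℝ f x (EuclideanSpace.single k 1)) * ξ i * ξ j

lemma fderiv_normsq (x v : EuclideanSpace ℝ (Fin n)) :
    fderiv ℝ (fun y : EuclideanSpace ℝ (Fin n) => ‖y‖ ^ 2) x v = 2 * ⟪x, v⟫ := by
  rw [(hasStrictFDerivAt_norm_sq x).hasFDerivAt.fderiv]
  simp [two_smul]; ring

lemma second_deriv_normsq (x : EuclideanSpace ℝ (Fin n)) (i j : Fin n) :
    fderiv ℝ (fun y : EuclideanSpace ℝ (Fin n) =>
        fderiv ℝ (fun z : EuclideanSpace ℝ (Fin n) => ‖z‖ ^ 2) y (EuclideanSpace.single j 1))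
      x (EuclideanSpace.single i 1) = 2 * (if i = j then (1:ℝ) else 0) := by
  have h : (fun y : EuclideanSpace ℝ (Fin n) =>
      fderiv ℝ (fun z : EuclideanSpace ℝ (Fin n) => ‖z‖ ^ 2) y (EuclideanSpace.single j 1))
      = fun y => ((2 : ℝ) • innerSL ℝ (EuclideanSpace.single j (1:ℝ))) y := by
    funext y
    rw [fderiv_normsq]
    simp [real_inner_comm]
  rw [h, ContinuousLinearMap.fderiv]
  simp [EuclideanSpace.inner_single_left, EuclideanSpace.single_apply, eq_comm]

lemma hasFDerivAt_norm' {x : EuclideanSpace ℝ (Fin n)} (hx : x ≠ 0) :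
    HasFDerivAt (fun y : EuclideanSpace ℝ (Fin n) => ‖y‖) (‖x‖⁻¹ • innerSL ℝ x) x := by
  have hr : ‖x‖ ≠ 0 := norm_ne_zero_iff.mpr hx
  have h1 : HasFDerivAt (fun y : EuclideanSpace ℝ (Fin n) => ‖y‖ ^ 2) (2 • innerSL ℝ x) x :=
    (hasStrictFDerivAt_norm_sq x).hasFDerivAt
  have hsq : ‖x‖ ^ 2 ≠ 0 := pow_ne_zero _ hr
  have h2 : HasDerivAt Real.sqrt (1 / (2 * Real.sqrt (‖x‖ ^ 2))) (‖x‖ ^ 2) :=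
    Real.hasDerivAt_sqrt hsq
  have h3 := h2.comp_hasFDerivAt x h1
  rw [Real.sqrt_sq (norm_nonneg x)] at h3
  rw [show (Real.sqrt ∘ fun y : EuclideanSpace ℝ (Fin n) => ‖y‖ ^ 2)
      = fun y : EuclideanSpace ℝ (Fin n) => ‖y‖ from funext fun y => Real.sqrt_sq (norm_nonneg y)] at h3
  refine h3.congr_fderiv ?_
  ext v
  simp only [ContinuousLinearMap.smul_apply, smul_eq_mul, nsmul_eq_mul, Nat.cast_ofNat]
  field_simp

lemma fderiv_u {c : ℝ → ℝ} {x : EuclideanSpace ℝ (Fin n)} (hx : x ≠ 0)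
    (hcd : DifferentiableAt ℝ c ‖x‖) (hc0 : c ‖x‖ ≠ 0) (v : EuclideanSpace ℝ (Fin n)) :
    fderiv ℝ (fun y : EuclideanSpace ℝ (Fin n) => ((c ‖y‖) ^ 2)⁻¹) x v
      = (-(2 * c ‖x‖ * deriv c ‖x‖) / ((c ‖x‖ ^ 2) ^ 2) * ‖x‖⁻¹) * ⟪x, v⟫ := by
  have hr : ‖x‖ ≠ 0 := norm_ne_zero_iff.mpr hx
  have hnorm := hasFDerivAt_norm' hx
  have h2 : HasDerivAt (fun s => ((c s) ^ 2)⁻¹)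
      (-(2 * c ‖x‖ * deriv c ‖x‖) / ((c ‖x‖ ^ 2) ^ 2)) ‖x‖ := by
    have h1 : HasDerivAt c (deriv c ‖x‖) ‖x‖ := hcd.hasDerivAt
    have h2 := (h1.pow 2).inv (pow_ne_zero 2 hc0)
    refine h2.congr_deriv ?_
    simp only [Pi.pow_apply]
    norm_num
  have h3 := h2.comp_hasFDerivAt x hnorm
  rw [show (fun y : EuclideanSpace ℝ (Fin n) => ((c ‖y‖) ^ 2)⁻¹)
      = ((fun s => (c s ^ 2)⁻¹) ∘ norm) from rfl, h3.fderiv]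
  simp [smul_smul]

lemma sff_eval {c : ℝ → ℝ} {x ξ : EuclideanSpace ℝ (Fin n)} (hx : x ≠ 0)
    (hcd : DifferentiableAt ℝ c ‖x‖) (hc0 : c ‖x‖ ≠ 0) (hperp : ⟪x, ξ⟫ = 0) :
    sffConf (fun y => c ‖y‖) (fun y : EuclideanSpace ℝ (Fin n) => ‖y‖ ^ 2) x ξ
      = (2 - 2 * ‖x‖ * deriv c ‖x‖ / c ‖x‖) * ‖ξ‖ ^ 2 := by
  set r := ‖x‖ with hrdef
  have hr : r ≠ 0 := norm_ne_zero_iff.mpr hx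
  set a := c r with hadef
  set d := deriv c r with hddef
  set K : ℝ := -(2 * a * d) / ((a ^ 2) ^ 2) * r⁻¹ with hKdef
  have hxi : ∀ u v : EuclideanSpace ℝ (Fin n), ⟪u, v⟫ = ∑ i, u i * v i := by
    intro u v; rw [PiLp.inner_apply]; simp
    exact Finset.sum_congr rfl fun i _ => mul_comm _ _
  have hxsum : ∑ i, x i * x i = r ^ 2 := by
    have h := real_inner_self_eq_norm_sq x
    rw [hxi] at h; exact h
  have hxiperp : ∑ i, x i * ξ i = 0 := by rw [← hxi]; exact hperp
  have hnormxi : ∑ i, ξ i * ξ i = ‖ξ‖ ^ 2 := by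
    have h := real_inner_self_eq_norm_sq ξ
    rw [hxi] at h; exact h
  have hsingle : ∀ (v : EuclideanSpace ℝ (Fin n)) (k : Fin n),
      ⟪v, EuclideanSpace.single k 1⟫ = v k := by
    intro v k
    rw [EuclideanSpace.inner_single_right]; simp
  -- closed form for each Hessian entry
  have hterm : ∀ i j : Fin n,
      (fderiv ℝ (fun y : EuclideanSpace ℝ (Fin n) =>
          fderiv ℝ (fun z : EuclideanSpace ℝ (Fin n) => ‖z‖ ^ 2) y (EuclideanSpace.single j 1))
        x (EuclideanSpace.single i 1)
       - ∑ k, gammaConf (fun y => c ‖y‖) x i j k *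
            fderiv ℝ (fun y : EuclideanSpace ℝ (Fin n) => ‖y‖ ^ 2) x (EuclideanSpace.single k 1))
      = ((2 + a ^ 2 * K * r ^ 2) * if i = j then (1:ℝ) else 0)
        - 2 * a ^ 2 * K * (x i * x j) := by
    intro i j
    have hgam : ∀ k, gammaConf (fun y => c ‖y‖) x i j k
        = (1 / 2) * a ^ 2 *
          ((if j = k then (1:ℝ) else 0) * (K * x i)
            + (if i = k then (1:ℝ) else 0) * (K * x j)
            - (if i = j then (1:ℝ) else 0) * (K * x k)) := by
      intro k
      rw [gammaConf]
      rw [fderiv_u hx hcd hc0, fderiv_u hx hcd hc0, fderiv_u hx hcd hc0,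
        hsingle, hsingle, hsingle]
    have hsum : (∑ k, gammaConf (fun y => c ‖y‖) x i j k *
            fderiv ℝ (fun y : EuclideanSpace ℝ (Fin n) => ‖y‖ ^ 2) x (EuclideanSpace.single k 1))
        = a ^ 2 * K * (2 * x i * x j) - (if i = j then (1:ℝ) else 0) * (a ^ 2 * K * r ^ 2) := by
      have hpt : ∀ k : Fin n, gammaConf (fun y => c ‖y‖) x i j k *
            fderiv ℝ (fun y : EuclideanSpace ℝ (Fin n) => ‖y‖ ^ 2) x (EuclideanSpace.single k 1)
          = ((if j = k then (1:ℝ) else 0) * (a ^ 2 * K * x i * x k)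
              + (if i = k then (1:ℝ) else 0) * (a ^ 2 * K * x j * x k))
            - (if i = j then (1:ℝ) else 0) * (a ^ 2 * K) * (x k * x k) := by
        intro k
        rw [hgam k, fderiv_normsq, hsingle]
        ring
      rw [Finset.sum_congr rfl fun k _ => hpt k]
      rw [Finset.sum_sub_distrib, Finset.sum_add_distrib]
      have e3 : (∑ k, (if i = j then (1:ℝ) else 0) * (a ^ 2 * K) * (x k * x k))
          = (if i = j then (1:ℝ) else 0) * (a ^ 2 * K * r ^ 2) := by
        rw [← Finset.mul_sum, hxsum]; ring
      rw [e3]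
      simp only [ite_mul, one_mul, zero_mul, Finset.sum_ite_eq, Finset.sum_ite_eq',
        Finset.mem_univ, if_true]
      ring
    rw [second_deriv_normsq, hsum]
    ring
  rw [sffConf]
  rw [Finset.sum_congr rfl fun i _ => Finset.sum_congr rfl fun j _ => by rw [hterm i j]]
  set A : ℝ := 2 + a ^ 2 * K * r ^ 2 with hAdef
  set B : ℝ := 2 * a ^ 2 * K with hBdef
  have hrow : ∀ i : Fin n,
      (∑ j, ((A * if i = j then (1:ℝ) else 0) - B * (x i * x j)) * ξ i * ξ j)
        = A * (ξ i * ξ i) := by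
    intro i
    have : ∀ j : Fin n, ((A * if i = j then (1:ℝ) else 0) - B * (x i * x j)) * ξ i * ξ j
        = (if i = j then (1:ℝ) else 0) * (A * ξ i * ξ j) - (B * x i * ξ i) * (x j * ξ j) := by
      intro j; ring
    rw [Finset.sum_congr rfl fun j _ => this j, Finset.sum_sub_distrib, ← Finset.mul_sum,
      hxiperp]
    simp only [ite_mul, one_mul, zero_mul, Finset.sum_ite_eq, Finset.sum_ite_eq',
      Finset.mem_univ, if_true, mul_zero, sub_zero]
    ring
  have expand : (∑ i, ∑ j, ((A * if i = j then (1:ℝ) else 0) - B * (x i * x j)) * ξ i * ξ j)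
      = A * ‖ξ‖ ^ 2 := by
    rw [Finset.sum_congr rfl fun i _ => hrow i, ← Finset.mul_sum, hnormxi]
  rw [show (∑ i, ∑ j,
      (((2 + a ^ 2 * K * r ^ 2) * if i = j then (1:ℝ) else 0)
        - 2 * a ^ 2 * K * (x i * x j)) * ξ i * ξ j)
    = (∑ i, ∑ j, ((A * if i = j then (1:ℝ) else 0) - B * (x i * x j)) * ξ i * ξ j) from rfl]
  rw [expand]
  have : A = 2 - 2 * r * d / a := by
    rw [hAdef, hKdef]
    field_simp
    ring
  rw [this]

/-- For a `C¹` radial speed `c > 0` on `[R₁, R₂]`, the Herglotz condition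
`d/dr (r/c(r)) > 0` on `[R₁,R₂]` holds if and only if the level sets of `κ(x) = R₂ − |x|`
(the spheres `{|x| = const}`) foliate the annulus `{R₁ ≤ |x| ≤ R₂}` by hypersurfaces each
strictly convex w.r.t. `c⁻²dx²` viewed from outside (normal in the direction `∇(|x|²)`). -/
theorem herglotz_iff_strictly_convex_foliation
    {n : ℕ} (hn : 2 ≤ n) (R₁ R₂ : ℝ) (hR₁ : 0 < R₁) (hR : R₁ ≤ R₂)
    (c : ℝ → ℝ) (hc : ContDiff ℝ 1 c)
    (hcpos : ∀ r ∈ Set.Icc R₁ R₂, 0 < c r) :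
    (∀ r ∈ Set.Icc R₁ R₂, 0 < deriv (fun s : ℝ => s / c s) r)
      ↔ (∀ x : EuclideanSpace ℝ (Fin n), R₁ ≤ ‖x‖ → ‖x‖ ≤ R₂ →
          ∀ ξ : EuclideanSpace ℝ (Fin n), ξ ≠ 0 → ⟪x, ξ⟫ = 0 →
            0 < sffConf (fun y => c ‖y‖) (fun y => ‖y‖ ^ 2) x ξ) := by
  have hcdiff : ∀ s : ℝ, DifferentiableAt ℝ c s := fun s => hc.differentiable one_ne_zero s
  have hderiv : ∀ s ∈ Set.Icc R₁ R₂,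
      deriv (fun t : ℝ => t / c t) s = (c s - s * deriv c s) / (c s) ^ 2 := by
    intro s hs
    have h := (hasDerivAt_id s).div ((hcdiff s).hasDerivAt) (hcpos s hs).ne'
    have h' := h.deriv
    simp at h'
    exact h'
  constructor
  · intro h x hx1 hx2 ξ hξ hperp
    have hrpos : 0 < ‖x‖ := lt_of_lt_of_le hR₁ hx1
    have hx0 : x ≠ 0 := norm_pos_iff.mp hrpos
    have hmem : ‖x‖ ∈ Set.Icc R₁ R₂ := ⟨hx1, hx2⟩
    have ha : 0 < c ‖x‖ := hcpos _ hmem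
    rw [sff_eval hx0 (hcdiff _) ha.ne' hperp]
    have h1 := h ‖x‖ hmem
    rw [hderiv _ hmem] at h1
    have h2 : 0 < c ‖x‖ - ‖x‖ * deriv c ‖x‖ := by
      have h3 := mul_pos h1 (pow_pos ha 2)
      rwa [div_mul_cancel₀ _ (pow_pos ha 2).ne'] at h3
    have h4 : 0 < 2 - 2 * ‖x‖ * deriv c ‖x‖ / c ‖x‖ := by
      rw [show (2 : ℝ) - 2 * ‖x‖ * deriv c ‖x‖ / c ‖x‖
          = 2 * (c ‖x‖ - ‖x‖ * deriv c ‖x‖) / c ‖x‖ by field_simp]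
      positivity
    have h5 : 0 < ‖ξ‖ ^ 2 := pow_pos (norm_pos_iff.mpr hξ) 2
    exact mul_pos h4 h5
  · intro h r hr
    have hrpos : 0 < r := lt_of_lt_of_le hR₁ hr.1
    have ha : 0 < c r := hcpos r hr
    rw [hderiv r hr]
    refine div_pos ?_ (pow_pos ha 2)
    set i0 : Fin n := ⟨0, by omega⟩ with hi0
    set i1 : Fin n := ⟨1, by omega⟩ with hi1
    have hne : i0 ≠ i1 := by
      simp [hi0, hi1, Fin.ext_iff]
    set x : EuclideanSpace ℝ (Fin n) := r • EuclideanSpace.single i0 1 with hxdef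
    set ξ : EuclideanSpace ℝ (Fin n) := EuclideanSpace.single i1 1 with hξdef
    have hxnorm : ‖x‖ = r := by
      rw [hxdef, norm_smul, EuclideanSpace.norm_single]
      simp [abs_of_pos hrpos]
    have hx0 : x ≠ 0 := by rw [← norm_pos_iff, hxnorm]; exact hrpos
    have hξ0 : ξ ≠ 0 := by
      intro h0
      have h1 : ξ i1 = 0 := by rw [h0]; rfl
      rw [hξdef, EuclideanSpace.single_apply] at h1
      simp at h1
    have hperp : ⟪x, ξ⟫ = 0 := by
      rw [hxdef, hξdef, real_inner_smul_left, EuclideanSpace.inner_single_left]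
      simp [EuclideanSpace.single_apply, hne]
    have hsff := h x (by rw [hxnorm]; exact hr.1) (by rw [hxnorm]; exact hr.2) ξ hξ0 hperp
    rw [sff_eval hx0 (hcdiff _) (by rw [hxnorm]; exact ha.ne') hperp, hxnorm] at hsff
    have hξnorm : ‖ξ‖ = 1 := by rw [hξdef]; simp
    rw [hξnorm] at hsff
    have h2 : 0 < 2 - 2 * r * deriv c r / c r := by simpa using hsff
    have h3 : 0 < c r * (2 - 2 * r * deriv c r / c r) := mul_pos ha h2
    have h4 : c r * (2 - 2 * r * deriv c r / c r) = 2 * c r - 2 * r * deriv c r := by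
      field_simp
    linarith
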